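/- Let x_1, …, x_N be N binary vectors of length S, each of Hamming weight W, with 1 ≤ W ≤ S, and let γ_{j,j'} = Σ_{s=0}^{S−1} x_{j,s} x_{j',s} (so γ_{j,j} = W). Then for every integer ℓ ≥ 1, Σ_{j=1}^{N} Σ_{j'=1}^{N} γ_{j,j'}^ℓ ≥ N² · Σ_{u=1}^{ℓ} ( C(W,u)² · C_{ℓ,u} / C(S,u) ), where C(a,b) denotes the binomial coefficient and C_{ℓ,u} = Σ_{k=0}^{u} (−1)^k C(u,k) (u−k)^ℓ. -/

import Mathlib

open Finset Function

/-- Hamming weight of a binary vector. -/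
def cwWeight {σ : Type*} [Fintype σ] (a : σ → Bool) : ℕ :=
  (Finset.univ.filter (fun s => a s = true)).card

/-- Overlap (number of common 1-coordinates) of two binary vectors. -/
def cwOverlap {σ : Type*} [Fintype σ] (a b : σ → Bool) : ℕ :=
  (Finset.univ.filter (fun s => a s = true ∧ b s = true)).card

/-- A binary constant-weight code with weight `W` and maximum pairwise overlap `K`:
the codewords are distinct, each has Hamming weight `W`, and every pair of distinct
codewords has overlap at most `K`. -/
def IsCWC {ι σ : Type*} [Fintype σ] (W K : ℕ) (x : ι → σ → Bool) : Prop :=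
  Function.Injective x ∧ (∀ j, cwWeight (x j) = W) ∧
    ∀ j j', j ≠ j' → cwOverlap (x j) (x j') ≤ K

/-- Cauchy–Schwarz lower bound on the `ℓ`-th order correlation sum of a
family of binary vectors of length `S` and constant weight `W`:
`∑_{j,j'} γ_{j,j'}^ℓ ≥ N² ∑_{u=1}^{ℓ} C(W,u)² C_{ℓ,u} / C(S,u)`, where
`C_{ℓ,u} = ∑_{k=0}^{u} (-1)^k C(u,k) (u-k)^ℓ`. -/

def Aq (ℓ u : ℕ) : ℚ :=
  ∑ k ∈ Finset.range (u + 1), (-1 : ℚ) ^ k * (u.choose k : ℚ) * (((u - k : ℕ)) : ℚ) ^ ℓ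

lemma Aq_zero_right (ℓ : ℕ) (hl : 1 ≤ ℓ) : Aq ℓ 0 = 0 := by
  simp [Aq, zero_pow (by omega : ℓ ≠ 0)]

lemma Aq_one (u : ℕ) : Aq 1 u = if u = 1 then 1 else 0 := by
  cases u with
  | zero => simp [Aq]
  | succ v =>
    have key : ∀ k ∈ Finset.range (v + 2),
        (-1 : ℚ) ^ k * ((v+1).choose k : ℚ) * (((v + 1 - k : ℕ)) : ℚ) ^ 1
        = ((v:ℚ)+1) * ((-1 : ℚ) ^ k * (v.choose k : ℚ)) := by
      intro k _
      have h : ((v+1).choose k : ℚ) * ((v + 1 - k : ℕ) : ℚ) = ((v:ℚ)+1) * (v.choose k : ℚ) := by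
        have := Nat.choose_mul_succ_eq v k
        have : (v.choose k * (v + 1) : ℚ) = ((v+1).choose k * (v + 1 - k) : ℕ) := by
          exact_mod_cast congrArg (Nat.cast (R := ℚ)) this
        push_cast at this
        push_cast
        linarith
      calc (-1 : ℚ) ^ k * ((v+1).choose k : ℚ) * (((v + 1 - k : ℕ)) : ℚ) ^ 1
          = (-1:ℚ)^k * (((v+1).choose k : ℚ) * ((v + 1 - k : ℕ) : ℚ)) := by ring
        _ = ((v:ℚ)+1) * ((-1 : ℚ) ^ k * (v.choose k : ℚ)) := by rw [h]; ring
    rw [Aq, Finset.sum_congr rfl key, ← Finset.mul_sum]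
    rw [Finset.sum_range_succ]
    simp only [Nat.choose_succ_self, Nat.cast_zero, mul_zero, add_zero]
    have h2 : ∑ k ∈ Finset.range (v + 1), (-1 : ℚ) ^ k * (v.choose k : ℚ)
        = if v = 0 then 1 else 0 := by
      have := Int.alternating_sum_range_choose (n := v)
      exact_mod_cast congrArg (Int.cast (R := ℚ)) this
    rw [h2]
    rcases Nat.eq_zero_or_pos v with h | h
    · subst h; norm_num
    · rw [if_neg (by omega), if_neg (by omega), mul_zero]

lemma Aq_rec (ℓ u : ℕ) (hl : 1 ≤ ℓ) :
    Aq (ℓ + 1) (u + 1) = ((u:ℚ) + 1) * (Aq ℓ (u + 1) + Aq ℓ u) := by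
  have key : ∀ k ∈ Finset.range (u + 2),
      (-1 : ℚ) ^ k * ((u+1).choose k : ℚ) * (((u + 1 - k : ℕ)) : ℚ) ^ (ℓ+1)
      = ((u:ℚ)+1) * ((-1 : ℚ) ^ k * (u.choose k : ℚ) * (((u + 1 - k : ℕ)) : ℚ) ^ ℓ) := by
    intro k _
    have h : ((u+1).choose k : ℚ) * ((u + 1 - k : ℕ) : ℚ) = ((u:ℚ)+1) * (u.choose k : ℚ) := by
      have h0 := Nat.choose_mul_succ_eq u k
      have : (u.choose k * (u + 1) : ℚ) = ((u+1).choose k * (u + 1 - k) : ℕ) := by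
        exact_mod_cast congrArg (Nat.cast (R := ℚ)) h0
      push_cast at this
      push_cast
      linarith
    calc (-1 : ℚ) ^ k * ((u+1).choose k : ℚ) * (((u + 1 - k : ℕ)) : ℚ) ^ (ℓ+1)
        = (((u+1).choose k : ℚ) * ((u + 1 - k : ℕ) : ℚ)) *
            ((-1:ℚ)^k * (((u + 1 - k : ℕ)) : ℚ) ^ ℓ) := by ring
      _ = _ := by rw [h]; ring
  rw [Aq, Finset.sum_congr rfl key, ← Finset.mul_sum]
  congr 1
  -- B = Aq ℓ (u+1) + Aq ℓ u
  rw [Finset.sum_range_succ]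
  simp only [Nat.choose_succ_self, Nat.cast_zero, mul_zero, zero_mul, add_zero]
  -- now B over range (u+1)
  have hA1 : Aq ℓ (u + 1) = ∑ k ∈ Finset.range (u + 1),
      (-1 : ℚ) ^ k * ((u+1).choose k : ℚ) * (((u + 1 - k : ℕ)) : ℚ) ^ ℓ := by
    rw [Aq, Finset.sum_range_succ]
    simp [zero_pow (by omega : ℓ ≠ 0)]
  have hA0 : Aq ℓ u = ∑ k ∈ Finset.range u,
      (-1 : ℚ) ^ k * (u.choose k : ℚ) * (((u - k : ℕ)) : ℚ) ^ ℓ := by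
    rw [Aq, Finset.sum_range_succ]
    simp [zero_pow (by omega : ℓ ≠ 0)]
  rw [hA1, hA0]
  rw [Finset.sum_range_succ', Finset.sum_range_succ']
  simp only [Nat.choose_zero_right, Nat.cast_one, pow_zero, one_mul, mul_one,
    Nat.sub_zero]
  have : ∀ k ∈ Finset.range u,
      (-1 : ℚ) ^ (k+1) * ((u+1).choose (k+1) : ℚ) * (((u + 1 - (k+1) : ℕ)) : ℚ) ^ ℓ
      = (-1 : ℚ) ^ (k+1) * ((u).choose (k+1) : ℚ) * (((u - k : ℕ)) : ℚ) ^ ℓ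
        + (-1 : ℚ) ^ (k+1) * ((u).choose k : ℚ) * (((u - k : ℕ)) : ℚ) ^ ℓ := by
    intro k _
    have hs : u + 1 - (k+1) = u - k := by omega
    rw [hs, Nat.choose_succ_succ]
    push_cast
    ring
  rw [Finset.sum_congr rfl this, Finset.sum_add_distrib]
  have hneg : ∀ k ∈ Finset.range u,
      (-1 : ℚ) ^ (k+1) * ((u).choose k : ℚ) * (((u - k : ℕ)) : ℚ) ^ ℓ
      = -((-1 : ℚ) ^ k * ((u).choose k : ℚ) * (((u - k : ℕ)) : ℚ) ^ ℓ) := by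
    intro k _; ring
  rw [Finset.sum_congr rfl hneg, Finset.sum_neg_distrib]
  have hfix : ∀ k ∈ Finset.range u,
      (-1 : ℚ) ^ (k+1) * ((u).choose (k+1) : ℚ) * (((u + 1 - (k+1) : ℕ)) : ℚ) ^ ℓ
      = (-1 : ℚ) ^ (k+1) * ((u).choose (k+1) : ℚ) * (((u - k : ℕ)) : ℚ) ^ ℓ := by
    intro k _
    rw [show u + 1 - (k+1) = u - k from by omega]
  rw [Finset.sum_congr rfl hfix]
  ring

lemma Aq_vanish (ℓ : ℕ) (hl : 1 ≤ ℓ) : ∀ u, ℓ < u → Aq ℓ u = 0 := by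
  induction ℓ, hl using Nat.le_induction with
  | base => intro u hu; rw [Aq_one, if_neg (by omega)]
  | succ ℓ hl ih =>
    intro u hu
    obtain ⟨v, rfl⟩ : ∃ v, u = v + 1 := ⟨u - 1, by omega⟩
    rw [Aq_rec ℓ v hl, ih (v+1) (by omega), ih v (by omega)]
    ring

lemma Aq_nonneg (ℓ : ℕ) (hl : 1 ≤ ℓ) : ∀ u, 0 ≤ Aq ℓ u := by
  induction ℓ, hl using Nat.le_induction with
  | base => intro u; rw [Aq_one]; split <;> norm_num
  | succ ℓ hl ih =>
    intro u
    cases u with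
    | zero => rw [Aq_zero_right _ (by omega)]
    | succ v =>
      rw [Aq_rec ℓ v hl]
      have := ih (v+1); have := ih v
      positivity

lemma Aq_expand (ℓ : ℕ) (hl : 1 ≤ ℓ) (m : ℕ) :
    ∑ u ∈ Finset.range ℓ, (m.choose (u+1) : ℚ) * Aq ℓ (u+1) = (m : ℚ) ^ ℓ := by
  induction ℓ, hl using Nat.le_induction with
  | base => simp [Aq_one]
  | succ ℓ hl ih =>
    have hrec : ∀ i ∈ Finset.range (ℓ+1),
        (m.choose (i+1) : ℚ) * Aq (ℓ+1) (i+1)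
        = ((i:ℚ)+1) * (m.choose (i+1) : ℚ) * Aq ℓ (i+1)
          + ((i:ℚ)+1) * (m.choose (i+1) : ℚ) * Aq ℓ i := by
      intro i _; rw [Aq_rec ℓ i hl]; ring
    rw [Finset.sum_congr rfl hrec, Finset.sum_add_distrib]
    rw [Finset.sum_range_succ ((fun i => ((i:ℚ)+1) * (m.choose (i+1) : ℚ) * Aq ℓ (i+1)))]
    rw [Aq_vanish ℓ hl (ℓ+1) (by omega), mul_zero, add_zero]
    rw [Finset.sum_range_succ' ((fun i => ((i:ℚ)+1) * (m.choose (i+1) : ℚ) * Aq ℓ i))]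
    rw [Aq_zero_right ℓ hl, mul_zero, add_zero]
    rw [← Finset.sum_add_distrib]
    have hcomb : ∀ i ∈ Finset.range ℓ,
        ((i:ℚ)+1) * (m.choose (i+1) : ℚ) * Aq ℓ (i+1)
          + (((i+1:ℕ):ℚ)+1) * (m.choose (i+1+1) : ℚ) * Aq ℓ (i+1)
        = (m:ℚ) * ((m.choose (i+1) : ℚ) * Aq ℓ (i+1)) := by
      intro i _
      by_cases him : i + 1 ≤ m
      · have h0 := Nat.choose_succ_right_eq m (i+1)
        have h1 : ((m.choose (i+2) * (i+2) : ℕ) : ℚ) = ((m.choose (i+1) * (m - (i+1)) : ℕ) : ℚ) := by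
          exact_mod_cast congrArg (Nat.cast (R := ℚ)) h0
        have hms : ((m - (i+1) : ℕ) : ℚ) = (m:ℚ) - ((i:ℚ)+1) := by
          push_cast [Nat.cast_sub him]; ring
        push_cast at h1
        rw [hms] at h1
        push_cast
        linear_combination Aq ℓ (i+1) * h1
      · have h1 : m.choose (i+1) = 0 := Nat.choose_eq_zero_of_lt (by omega)
        have h2 : m.choose (i+2) = 0 := Nat.choose_eq_zero_of_lt (by omega)
        rw [h1, h2]; push_cast; ring
    rw [Finset.sum_congr rfl hcomb, ← Finset.mul_sum, ih]
    ring

lemma filter_subset_powersetCard {σ : Type*} [Fintype σ] [DecidableEq σ]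
    (A : Finset σ) (u : ℕ) :
    Finset.filter (fun T => T ⊆ A) (Finset.powersetCard u (Finset.univ : Finset σ))
      = Finset.powersetCard u A := by
  ext T
  simp only [Finset.mem_filter, Finset.mem_powersetCard, Finset.subset_univ, true_and]
  tauto

lemma card_choose_sum {σ : Type*} [Fintype σ] [DecidableEq σ] (A : Finset σ) (u : ℕ) :
    ∑ T ∈ Finset.powersetCard u (Finset.univ : Finset σ),
        (if T ⊆ A then (1:ℚ) else 0) = (A.card.choose u : ℚ) := by
  rw [Finset.sum_boole, filter_subset_powersetCard, Finset.card_powersetCard]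

lemma choose_inter_eq_sum {σ : Type*} [Fintype σ] [DecidableEq σ] (A B : Finset σ) (u : ℕ) :
    (((A ∩ B).card.choose u : ℕ) : ℚ)
    = ∑ T ∈ Finset.powersetCard u (Finset.univ : Finset σ),
        (if T ⊆ A then (1:ℚ) else 0) * (if T ⊆ B then (1:ℚ) else 0) := by
  have h1 : ∀ T ∈ Finset.powersetCard u (Finset.univ : Finset σ),
      (if T ⊆ A then (1:ℚ) else 0) * (if T ⊆ B then (1:ℚ) else 0)
      = if T ⊆ A ∩ B then (1:ℚ) else 0 := by
    intro T _
    by_cases hA : T ⊆ A <;> by_cases hB : T ⊆ B <;>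
      simp [hA, hB, Finset.subset_inter_iff]
  rw [Finset.sum_congr rfl h1, card_choose_sum]


set_option maxHeartbeats 1000000 in
theorem cwc_correlation_moment_lower_bound {S N W : ℕ} (x : Fin N → Fin S → Bool)
    (hW : 1 ≤ W) (hWS : W ≤ S) (hwt : ∀ j, cwWeight (x j) = W)
    (ℓ : ℕ) (hl : 1 ≤ ℓ) :
    (N : ℚ) ^ 2 * ∑ u ∈ Finset.Icc 1 ℓ,
        ((W.choose u : ℚ)) ^ 2 *
          (∑ k ∈ Finset.range (u + 1),
            (-1 : ℚ) ^ k * (u.choose k : ℚ) * (((u - k : ℕ)) : ℚ) ^ ℓ) / (S.choose u : ℚ)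
      ≤ ∑ j : Fin N, ∑ j' : Fin N, ((cwOverlap (x j) (x j') : ℕ) : ℚ) ^ ℓ := by
  classical
  set supp : Fin N → Finset (Fin S) := fun j => Finset.univ.filter (fun s => x j s = true)
    with hsupp
  have hover : ∀ j j', cwOverlap (x j) (x j') = (supp j ∩ supp j').card := by
    intro j j'
    rw [cwOverlap, hsupp]
    congr 1
    rw [Finset.filter_and]
  have hcard : ∀ j, (supp j).card = W := fun j => hwt j
  have hRHS : ∑ j : Fin N, ∑ j' : Fin N, ((cwOverlap (x j) (x j') : ℕ) : ℚ) ^ ℓ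
      = ∑ i ∈ Finset.range ℓ, Aq ℓ (i+1) *
          ∑ T ∈ Finset.powersetCard (i+1) (Finset.univ : Finset (Fin S)),
            (∑ j : Fin N, (if T ⊆ supp j then (1:ℚ) else 0))^2 := by
    have h1 : ∀ j j', ((cwOverlap (x j) (x j') : ℕ) : ℚ) ^ ℓ
        = ∑ i ∈ Finset.range ℓ, Aq ℓ (i+1) *
            ∑ T ∈ Finset.powersetCard (i+1) (Finset.univ : Finset (Fin S)),
              (if T ⊆ supp j then (1:ℚ) else 0) * (if T ⊆ supp j' then (1:ℚ) else 0) := by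
      intro j j'
      rw [← Aq_expand ℓ hl (cwOverlap (x j) (x j'))]
      refine Finset.sum_congr rfl fun i _ => ?_
      rw [hover j j', choose_inter_eq_sum]
      ring
    calc ∑ j : Fin N, ∑ j' : Fin N, ((cwOverlap (x j) (x j') : ℕ) : ℚ) ^ ℓ
        = ∑ j : Fin N, ∑ j' : Fin N, ∑ i ∈ Finset.range ℓ, Aq ℓ (i+1) *
            ∑ T ∈ Finset.powersetCard (i+1) (Finset.univ : Finset (Fin S)),
              (if T ⊆ supp j then (1:ℚ) else 0) * (if T ⊆ supp j' then (1:ℚ) else 0) :=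
          Finset.sum_congr rfl fun j _ => Finset.sum_congr rfl fun j' _ => h1 j j'
      _ = ∑ j : Fin N, ∑ i ∈ Finset.range ℓ, ∑ j' : Fin N, Aq ℓ (i+1) *
            ∑ T ∈ Finset.powersetCard (i+1) (Finset.univ : Finset (Fin S)),
              (if T ⊆ supp j then (1:ℚ) else 0) * (if T ⊆ supp j' then (1:ℚ) else 0) :=
          Finset.sum_congr rfl fun j _ => Finset.sum_comm
      _ = ∑ i ∈ Finset.range ℓ, ∑ j : Fin N, ∑ j' : Fin N, Aq ℓ (i+1) *
            ∑ T ∈ Finset.powersetCard (i+1) (Finset.univ : Finset (Fin S)),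
              (if T ⊆ supp j then (1:ℚ) else 0) * (if T ⊆ supp j' then (1:ℚ) else 0) :=
          Finset.sum_comm
      _ = ∑ i ∈ Finset.range ℓ, Aq ℓ (i+1) *
            ∑ T ∈ Finset.powersetCard (i+1) (Finset.univ : Finset (Fin S)),
              (∑ j : Fin N, (if T ⊆ supp j then (1:ℚ) else 0))^2 := by
          refine Finset.sum_congr rfl fun i _ => ?_
          simp only [← Finset.mul_sum]
          congr 1
          calc ∑ j : Fin N, ∑ j' : Fin N,
                ∑ T ∈ Finset.powersetCard (i+1) (Finset.univ : Finset (Fin S)),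
                  (if T ⊆ supp j then (1:ℚ) else 0) * (if T ⊆ supp j' then (1:ℚ) else 0)
              = ∑ j : Fin N, ∑ T ∈ Finset.powersetCard (i+1) (Finset.univ : Finset (Fin S)),
                  ∑ j' : Fin N,
                  (if T ⊆ supp j then (1:ℚ) else 0) * (if T ⊆ supp j' then (1:ℚ) else 0) :=
                Finset.sum_congr rfl fun j _ => Finset.sum_comm
            _ = ∑ T ∈ Finset.powersetCard (i+1) (Finset.univ : Finset (Fin S)),
                  ∑ j : Fin N, ∑ j' : Fin N,
                  (if T ⊆ supp j then (1:ℚ) else 0) * (if T ⊆ supp j' then (1:ℚ) else 0) :=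
                Finset.sum_comm
            _ = ∑ T ∈ Finset.powersetCard (i+1) (Finset.univ : Finset (Fin S)),
                  (∑ j : Fin N, (if T ⊆ supp j then (1:ℚ) else 0))^2 :=
                Finset.sum_congr rfl fun T _ => by
                  rw [sq]; exact (Finset.sum_mul_sum _ _ _ _).symm
  rw [hRHS]
  rw [Finset.mul_sum, ← Finset.Ico_add_one_right_eq_Icc, Finset.sum_Ico_eq_sum_range]
  rw [Nat.add_sub_cancel]
  refine Finset.sum_le_sum fun i _ => ?_
  have hu1 : 1 + i = i + 1 := by omega
  rw [hu1]
  set u := i + 1 with hu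
  have hsum_n : ∑ T ∈ Finset.powersetCard u (Finset.univ : Finset (Fin S)),
      (∑ j : Fin N, (if T ⊆ supp j then (1:ℚ) else 0))
      = (N : ℚ) * (W.choose u : ℚ) := by
    rw [Finset.sum_comm]
    have h2 : ∀ j : Fin N, ∑ T ∈ Finset.powersetCard u (Finset.univ : Finset (Fin S)),
        (if T ⊆ supp j then (1:ℚ) else 0) = (W.choose u : ℚ) := by
      intro j; rw [card_choose_sum, hcard]
    rw [Finset.sum_congr rfl fun j _ => h2 j]
    simp [mul_comm]
  have hnn : (0:ℚ) ≤ ∑ T ∈ Finset.powersetCard u (Finset.univ : Finset (Fin S)),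
      (∑ j : Fin N, (if T ⊆ supp j then (1:ℚ) else 0))^2 :=
    Finset.sum_nonneg fun T _ => sq_nonneg _
  have hAnn : 0 ≤ Aq ℓ u := Aq_nonneg ℓ hl u
  show (N : ℚ)^2 * ((W.choose u : ℚ)^2 * Aq ℓ u / (S.choose u : ℚ))
      ≤ Aq ℓ u * ∑ T ∈ Finset.powersetCard u (Finset.univ : Finset (Fin S)),
          (∑ j : Fin N, (if T ⊆ supp j then (1:ℚ) else 0))^2
  by_cases hSu : u ≤ S
  · have hpos : (0:ℚ) < (S.choose u : ℚ) := by exact_mod_cast Nat.choose_pos hSu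
    have hcs := sq_sum_le_card_mul_sum_sq
      (s := Finset.powersetCard u (Finset.univ : Finset (Fin S)))
      (f := fun T => ∑ j : Fin N, (if T ⊆ supp j then (1:ℚ) else 0))
    rw [hsum_n, Finset.card_powersetCard, Finset.card_univ, Fintype.card_fin] at hcs
    have hdiv : ((N:ℚ) * (W.choose u : ℚ))^2 / (S.choose u : ℚ)
        ≤ ∑ T ∈ Finset.powersetCard u (Finset.univ : Finset (Fin S)),
            (∑ j : Fin N, (if T ⊆ supp j then (1:ℚ) else 0))^2 := by
      rw [div_le_iff₀ hpos]
      calc ((N:ℚ) * (W.choose u : ℚ))^2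
          ≤ ((S.choose u : ℕ) : ℚ) * ∑ T ∈ Finset.powersetCard u
              (Finset.univ : Finset (Fin S)),
              (∑ j : Fin N, (if T ⊆ supp j then (1:ℚ) else 0))^2 := hcs
        _ = _ := by ring
    calc (N : ℚ)^2 * ((W.choose u : ℚ)^2 * Aq ℓ u / (S.choose u : ℚ))
        = Aq ℓ u * (((N:ℚ) * (W.choose u : ℚ))^2 / (S.choose u : ℚ)) := by ring
      _ ≤ _ := mul_le_mul_of_nonneg_left hdiv hAnn
  · have hW0 : W.choose u = 0 := Nat.choose_eq_zero_of_lt (by omega)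
    rw [hW0]
    calc (N:ℚ)^2 * (((0:ℕ):ℚ)^2 * Aq ℓ u / (S.choose u : ℚ)) = 0 := by norm_num
      _ ≤ _ := mul_nonneg hAnn hnn
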